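/- Let z: [0,T] → R^d be continuous with z(0) = 0 and dz = -dk + dk̃ where k, k̃ are continuous BV functions such that for a.e. t (w.r.t. d|k|, d|k̃|) the densities dk(t) ∈ N(C(t), x(t)) and dk̃(t) ∈ N(C(t), x̃(t)) with x, x̃ ∈ C(t) and z = x - x̃, each C(t) being η-prox-regular. Then e(t) := |z(t)|² satisfies de(t) ≤ (e(t)/(2η)) (d|k|(t) + d|k̃|(t)) as measures, and consequently e ≡ 0. -/

import Mathlib

open Metric Set MeasureTheory
open scoped RealInnerProductSpace NNReal

def projSet {d : ℕ} (C : Set (EuclideanSpace ℝ (Fin d))) (z : EuclideanSpace ℝ (Fin d)) :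
    Set (EuclideanSpace ℝ (Fin d)) :=
  {y | y ∈ C ∧ dist z y = Metric.infDist z C}

def proxNormalCone {d : ℕ} (C : Set (EuclideanSpace ℝ (Fin d)))
    (x : EuclideanSpace ℝ (Fin d)) : Set (EuclideanSpace ℝ (Fin d)) :=
  {v | ∃ s : ℝ, 0 < s ∧ x ∈ projSet C (x + s • v)}

def IsProxRegular {d : ℕ} (η : ℝ) (C : Set (EuclideanSpace ℝ (Fin d))) : Prop :=
  ∀ x ∈ C, ∀ v ∈ proxNormalCone C x, v ≠ 0 →
    Metric.ball (x + (η / ‖v‖) • v) η ∩ C = ∅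
set_option maxHeartbeats 1000000

lemma prox_ineq {d : ℕ} {η : ℝ} (hη : 0 < η) {C : Set (EuclideanSpace ℝ (Fin d))}
    (hC : IsProxRegular η C) {x y v : EuclideanSpace ℝ (Fin d)}
    (hx : x ∈ C) (hy : y ∈ C) (hv : v ∈ proxNormalCone C x) :
    ⟪v, y - x⟫ ≤ ‖v‖ * ‖y - x‖ ^ 2 / (2 * η) := by
  by_cases h0 : v = 0
  · simp [h0]
  · have hball := hC x hx v hv h0
    have hy' : y ∉ Metric.ball (x + (η / ‖v‖) • v) η := by
      intro h
      have : y ∈ Metric.ball (x + (η / ‖v‖) • v) η ∩ C := ⟨h, hy⟩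
      rw [hball] at this
      exact this
    rw [Metric.mem_ball, not_lt] at hy'
    have hdist : dist y (x + (η / ‖v‖) • v) = ‖(y - x) - (η / ‖v‖) • v‖ := by
      rw [dist_eq_norm]
      congr 1
      abel
    set c : ℝ := η / ‖v‖ with hc
    have hvn : (0:ℝ) < ‖v‖ := norm_pos_iff.mpr h0
    have hcpos : 0 < c := div_pos hη hvn
    have hsq : η ^ 2 ≤ ‖(y - x) - c • v‖ ^ 2 := by
      have h1 : η ≤ ‖(y - x) - c • v‖ := by rw [hdist] at hy'; exact hy'
      nlinarith [norm_nonneg ((y - x) - c • v)]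
    have hexp : ‖(y - x) - c • v‖ ^ 2
        = ‖y - x‖ ^ 2 - 2 * (c * ⟪y - x, v⟫) + c ^ 2 * ‖v‖ ^ 2 := by
      rw [norm_sub_sq_real, real_inner_smul_right, norm_smul, Real.norm_eq_abs,
        abs_of_pos hcpos]
      ring
    have hcv : c * ‖v‖ = η := by rw [hc]; field_simp
    have h2 : 2 * c * ⟪y - x, v⟫ ≤ ‖y - x‖ ^ 2 := by nlinarith
    have h3 : ⟪v, y - x⟫ = ⟪y - x, v⟫ := real_inner_comm _ _
    rw [h3, le_div_iff₀ (by positivity : (0:ℝ) < 2 * η)]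
    calc ⟪y - x, v⟫ * (2 * η) = (2 * c * ⟪y - x, v⟫) * ‖v‖ := by
          rw [← hcv]; ring
      _ ≤ ‖y - x‖ ^ 2 * ‖v‖ := by nlinarith
      _ = ‖v‖ * ‖y - x‖ ^ 2 := by ring

section Aux
variable {d : ℕ}

local notation "E" => EuclideanSpace ℝ (Fin d)

lemma eBound {T : ℝ} {z : ℝ → E} (hzc : ContinuousOn z (Set.Icc 0 T)) :
    ∃ B : ℝ, 0 ≤ B ∧ ∀ r ∈ Set.Icc 0 T, ‖z r‖ ^ 2 ≤ B := by
  obtain ⟨C, hC⟩ := isCompact_Icc.exists_bound_of_continuousOn (hzc.norm.pow 2)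
  refine ⟨max C 0, le_max_right _ _, fun r hr => ?_⟩
  have := hC r hr
  rw [Real.norm_eq_abs] at this
  exact (le_abs_self _).trans (this.trans (le_max_left _ _))

lemma part1_integrableOn {η T : ℝ} (hη : 0 < η) {ν : Measure ℝ}
    {ζ : ℝ → E} {z : ℝ → E} (hζ : Integrable ζ ν)
    (hzc : ContinuousOn z (Set.Icc 0 T)) {s t : ℝ} (hs : 0 ≤ s) (htT : t ≤ T) :
    IntegrableOn (fun r => ‖z r‖ ^ 2 * ‖ζ r‖ / η) (Set.Ioc s t) ν := by
  obtain ⟨B, hB0, hB⟩ := eBound hzc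
  have hsub : Set.Ioc s t ⊆ Set.Icc 0 T := fun r hr => ⟨hs.trans hr.1.le, hr.2.trans htT⟩
  have hmeas : AEStronglyMeasurable (fun r => ‖z r‖ ^ 2 * ‖ζ r‖ / η)
      (ν.restrict (Set.Ioc s t)) := by
    have h1 : ContinuousOn (fun r => ‖z r‖ ^ 2) (Set.Ioc s t) := (hzc.mono hsub).norm.pow 2
    have h2 := (h1.aestronglyMeasurable measurableSet_Ioc).mul
      hζ.norm.aestronglyMeasurable.restrict
    simpa only [div_eq_mul_inv, Pi.mul_apply] using h2.mul_const η⁻¹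
  refine Integrable.mono' ((hζ.norm.const_mul (B / η)).restrict (s := Set.Ioc s t)) hmeas ?_
  filter_upwards [ae_restrict_mem measurableSet_Ioc] with r hr
  have h1 := hB r (hsub hr)
  have h2 : (0:ℝ) ≤ ‖z r‖ ^ 2 * ‖ζ r‖ / η := by positivity
  rw [Real.norm_eq_abs, abs_of_nonneg h2]
  have : B / η * ‖ζ r‖ = B * ‖ζ r‖ / η := by ring
  rw [this]
  gcongr

lemma one_side {η T : ℝ} (hη : 0 < η) {ν : Measure ℝ}
    {ζ : ℝ → E} {z : ℝ → E} (hζ : Integrable ζ ν)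
    (hzc : ContinuousOn z (Set.Icc 0 T))
    (hA : ∀ᵐ r ∂ν, r ∈ Set.Icc 0 T → 2 * ⟪z r, ζ r⟫ ≤ ‖z r‖ ^ 2 * ‖ζ r‖ / η)
    {δ ω : ℝ}
    (hmod : ∀ u ∈ Set.Icc 0 T, ∀ v ∈ Set.Icc 0 T, |u - v| ≤ δ → ‖z u - z v‖ ≤ ω)
    {s t : ℝ} (hs : 0 ≤ s) (hst : s ≤ t) (htT : t ≤ T) (hδ : t - s ≤ δ) :
    ⟪z t + z s, ∫ r in Set.Ioc s t, ζ r ∂ν⟫ ≤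
      ∫ r in Set.Ioc s t, (‖z r‖ ^ 2 * ‖ζ r‖ / η + 2 * ω * ‖ζ r‖) ∂ν := by
  rw [← integral_inner hζ.integrableOn (z t + z s)]
  have hfi : Integrable (fun r => (⟪z t + z s, ζ r⟫ : ℝ)) (ν.restrict (Set.Ioc s t)) :=
    Integrable.const_inner _ hζ.integrableOn
  have hgi : Integrable (fun r => ‖z r‖ ^ 2 * ‖ζ r‖ / η + 2 * ω * ‖ζ r‖)
      (ν.restrict (Set.Ioc s t)) :=
    (part1_integrableOn hη hζ hzc hs htT).add ((hζ.norm.const_mul (2 * ω)).restrict)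
  refine setIntegral_mono_ae_restrict hfi hgi ?_
  filter_upwards [ae_restrict_mem measurableSet_Ioc, ae_restrict_of_ae hA] with r hr hAr
  have hsub : Set.Ioc s t ⊆ Set.Icc 0 T := fun u hu => ⟨hs.trans hu.1.le, hu.2.trans htT⟩
  have hrI : r ∈ Set.Icc 0 T := hsub hr
  have htI : t ∈ Set.Icc 0 T := ⟨hs.trans hst, htT⟩
  have hsI : s ∈ Set.Icc 0 T := ⟨hs, hst.trans htT⟩
  have h2 := hAr hrI
  have hw : z t + z s = z r + z r + ((z t - z r) + (z s - z r)) := by abel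
  rw [hw, inner_add_left, inner_add_left, inner_add_left]
  have e1 : ⟪z t - z r, ζ r⟫ ≤ ω * ‖ζ r‖ := by
    refine (real_inner_le_norm _ _).trans (mul_le_mul_of_nonneg_right ?_ (norm_nonneg _))
    refine hmod t htI r hrI ?_
    rw [abs_of_nonneg (by linarith [hr.2] : (0:ℝ) ≤ t - r)]
    linarith [hr.1]
  have e2 : ⟪z s - z r, ζ r⟫ ≤ ω * ‖ζ r‖ := by
    refine (real_inner_le_norm _ _).trans (mul_le_mul_of_nonneg_right ?_ (norm_nonneg _))
    refine hmod s hsI r hrI ?_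
    rw [abs_of_nonpos (by linarith [hr.1] : s - r ≤ (0:ℝ))]
    linarith [hr.2]
  linarith

lemma energy_increment {η T : ℝ} (hη : 0 < η) {μ μ' : Measure ℝ}
    {ζ ζ' : ℝ → E} {z : ℝ → E} (hζ : Integrable ζ μ) (hζ' : Integrable ζ' μ')
    (hzc : ContinuousOn z (Set.Icc 0 T))
    (hA : ∀ᵐ r ∂μ, r ∈ Set.Icc 0 T → 2 * ⟪z r, ζ r⟫ ≤ ‖z r‖ ^ 2 * ‖ζ r‖ / η)
    (hA' : ∀ᵐ r ∂μ', r ∈ Set.Icc 0 T → 2 * ⟪z r, ζ' r⟫ ≤ ‖z r‖ ^ 2 * ‖ζ' r‖ / η)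
    {δ ω : ℝ}
    (hmod : ∀ u ∈ Set.Icc 0 T, ∀ v ∈ Set.Icc 0 T, |u - v| ≤ δ → ‖z u - z v‖ ≤ ω)
    {s t : ℝ} (hs : 0 ≤ s) (hst : s ≤ t) (htT : t ≤ T) (hδ : t - s ≤ δ)
    (hd : z t - z s = (∫ r in Set.Ioc s t, ζ r ∂μ) + ∫ r in Set.Ioc s t, ζ' r ∂μ') :
    ‖z t‖ ^ 2 - ‖z s‖ ^ 2 ≤
      (∫ r in Set.Ioc s t, (‖z r‖ ^ 2 * ‖ζ r‖ / η + 2 * ω * ‖ζ r‖) ∂μ)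
      + ∫ r in Set.Ioc s t, (‖z r‖ ^ 2 * ‖ζ' r‖ / η + 2 * ω * ‖ζ' r‖) ∂μ' := by
  have hid : ‖z t‖ ^ 2 - ‖z s‖ ^ 2 = ⟪z t + z s, z t - z s⟫ := by
    rw [inner_sub_right, inner_add_left, inner_add_left,
      real_inner_self_eq_norm_sq, real_inner_self_eq_norm_sq]
    have h := real_inner_comm (z s) (z t)
    linarith
  rw [hid, hd, inner_add_right]
  exact add_le_add (one_side hη hζ hzc hA hmod hs hst htT hδ)
    (one_side hη hζ' hzc hA' hmod hs hst htT hδ)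

lemma key_ineq {d : ℕ} {η T : ℝ} {μ μ' : Measure ℝ}
    {ζ ζ' z : ℝ → EuclideanSpace ℝ (Fin d)} (hη : 0 < η)
    (hζ : Integrable ζ μ) (hζ' : Integrable ζ' μ')
    (hzc : ContinuousOn z (Set.Icc 0 T))
    (hA : ∀ᵐ r ∂μ, r ∈ Set.Icc 0 T → 2 * ⟪z r, ζ r⟫ ≤ ‖z r‖ ^ 2 * ‖ζ r‖ / η)
    (hA' : ∀ᵐ r ∂μ', r ∈ Set.Icc 0 T → 2 * ⟪z r, ζ' r⟫ ≤ ‖z r‖ ^ 2 * ‖ζ' r‖ / η)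
    (hzdiff : ∀ s t : ℝ, 0 ≤ s → s ≤ t → t ≤ T →
      z t - z s = (∫ r in Set.Ioc s t, ζ r ∂μ) + ∫ r in Set.Ioc s t, ζ' r ∂μ')
    {a t : ℝ} (ha : 0 ≤ a) (hat : a ≤ t) (htT : t ≤ T) :
    ‖z t‖ ^ 2 - ‖z a‖ ^ 2 ≤ (∫ r in Set.Ioc a t, ‖z r‖ ^ 2 * ‖ζ r‖ / η ∂μ)
      + ∫ r in Set.Ioc a t, ‖z r‖ ^ 2 * ‖ζ' r‖ / η ∂μ' := by
  have hT : (0:ℝ) ≤ T := ha.trans (hat.trans htT)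
  refine le_of_forall_sub_le fun ε hε => sub_le_iff_le_add.mpr ?_
  set L := (∫ r, ‖ζ r‖ ∂μ) + ∫ r, ‖ζ' r‖ ∂μ' with hLdef
  have hL0 : 0 ≤ L :=
    add_nonneg (integral_nonneg fun r => norm_nonneg _) (integral_nonneg fun r => norm_nonneg _)
  set ω := ε / (2 * (L + 1)) with hωdef
  have hω0 : 0 < ω := by positivity
  -- uniform continuity
  have hu : UniformContinuousOn z (Set.Icc 0 T) :=
    isCompact_Icc.uniformContinuousOn_of_continuous hzc
  obtain ⟨δ₀, hδ₀, hδu⟩ := Metric.uniformContinuousOn_iff.mp hu ω hω0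
  set δ := δ₀ / 2 with hδdef
  have hδpos : 0 < δ := by positivity
  have hmod : ∀ u ∈ Set.Icc 0 T, ∀ v ∈ Set.Icc 0 T, |u - v| ≤ δ → ‖z u - z v‖ ≤ ω := by
    intro u hu' v hv' huv
    have : dist u v < δ₀ := by
      rw [Real.dist_eq]
      calc |u - v| ≤ δ := huv
        _ < δ₀ := by rw [hδdef]; linarith
    have := hδu u hu' v hv' this
    rw [dist_eq_norm] at this
    exact this.le
  -- choose n
  obtain ⟨n₀, hn₀⟩ := exists_nat_ge ((t - a) / δ)
  set n := max n₀ 1 with hndef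
  have hn1 : 1 ≤ n := le_max_right _ _
  have hnpos : (0:ℝ) < n := by exact_mod_cast hn1
  have hta : (t - a) / δ ≤ n := hn₀.trans (by exact_mod_cast le_max_left _ _)
  have htan : t - a ≤ n * δ := by
    rw [div_le_iff₀ hδpos] at hta; linarith
  set c := (t - a) / n with hcdef
  have hc0 : 0 ≤ c := by
    apply div_nonneg (by linarith) hnpos.le
  have hcδ : c ≤ δ := by
    rw [hcdef, div_le_iff₀ hnpos]; linarith [mul_comm (n:ℝ) δ]
  set p : ℕ → ℝ := fun i => a + i * c with hpdef
  have hp0 : p 0 = a := by simp [hpdef]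
  have hpn : p n = t := by
    have : (n:ℝ) ≠ 0 := ne_of_gt hnpos
    simp only [hpdef, hcdef]
    field_simp
    ring
  have hpmono : ∀ i : ℕ, p i ≤ p (i + 1) := by
    intro i
    simp only [hpdef]
    have : (i:ℝ) * c ≤ (i + 1) * c := by nlinarith
    push_cast
    linarith
  have hple : ∀ i j : ℕ, i ≤ j → p i ≤ p j := by
    intro i j hij
    simp only [hpdef]
    have : (i:ℝ) ≤ j := by exact_mod_cast hij
    nlinarith
  have hp_nonneg : ∀ i : ℕ, 0 ≤ p i := by
    intro i
    simp only [hpdef]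
    positivity
  have hp_leT : ∀ i : ℕ, i ≤ n → p i ≤ T := by
    intro i hi
    have := hple i n hi
    rw [hpn] at this
    exact this.trans htT
  have hdiff : ∀ i : ℕ, p (i + 1) - p i ≤ δ := by
    intro i
    simp only [hpdef]
    push_cast
    have : (a + ((i:ℝ) + 1) * c) - (a + i * c) = c := by ring
    rw [this]
    exact hcδ
  -- integrands
  have hGint : ∀ (ν : Measure ℝ) (w : ℝ → EuclideanSpace ℝ (Fin d)),
      Integrable w ν → ∀ s t' : ℝ, 0 ≤ s → t' ≤ T →
      IntegrableOn (fun r => ‖z r‖ ^ 2 * ‖w r‖ / η + 2 * ω * ‖w r‖) (Set.Ioc s t') ν := by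
    intro ν w hw s t' hs ht'
    exact (part1_integrableOn hη hw hzc hs ht').add ((hw.norm.const_mul (2 * ω)).restrict)
  -- induction
  have ind : ∀ i : ℕ, i ≤ n → ‖z (p i)‖ ^ 2 - ‖z a‖ ^ 2 ≤
      (∫ r in Set.Ioc a (p i), (‖z r‖ ^ 2 * ‖ζ r‖ / η + 2 * ω * ‖ζ r‖) ∂μ)
      + ∫ r in Set.Ioc a (p i), (‖z r‖ ^ 2 * ‖ζ' r‖ / η + 2 * ω * ‖ζ' r‖) ∂μ' := by
    intro i
    induction i with
    | zero =>
      intro _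
      rw [hp0]
      simp
    | succ i ih =>
      intro hi
      have hi' : i ≤ n := Nat.le_of_succ_le hi
      have h1 := ih hi'
      have hapi : a ≤ p i := by rw [← hp0]; exact hple 0 i (Nat.zero_le _)
      have hpi1T : p (i + 1) ≤ T := hp_leT _ hi
      have hpiT : p i ≤ T := (hpmono i).trans hpi1T
      have h2 := energy_increment (μ := μ) (μ' := μ') hη hζ hζ' hzc hA hA' hmod
        (hp_nonneg i) (hpmono i) hpi1T (hdiff i)
        (hzdiff (p i) (p (i+1)) (hp_nonneg i) (hpmono i) hpi1T)
      have hun : Set.Ioc a (p i) ∪ Set.Ioc (p i) (p (i + 1)) = Set.Ioc a (p (i + 1)) :=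
        Set.Ioc_union_Ioc_eq_Ioc hapi (hpmono i)
      have hs1 : ∫ r in Set.Ioc a (p (i+1)), (‖z r‖ ^ 2 * ‖ζ r‖ / η + 2 * ω * ‖ζ r‖) ∂μ
          = (∫ r in Set.Ioc a (p i), (‖z r‖ ^ 2 * ‖ζ r‖ / η + 2 * ω * ‖ζ r‖) ∂μ)
          + ∫ r in Set.Ioc (p i) (p (i+1)), (‖z r‖ ^ 2 * ‖ζ r‖ / η + 2 * ω * ‖ζ r‖) ∂μ := by
        rw [← hun]
        exact setIntegral_union (Set.Ioc_disjoint_Ioc_of_le le_rfl) measurableSet_Ioc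
          (hGint μ ζ hζ a (p i) ha hpiT) (hGint μ ζ hζ (p i) (p (i+1)) (hp_nonneg i) hpi1T)
      have hs2 : ∫ r in Set.Ioc a (p (i+1)), (‖z r‖ ^ 2 * ‖ζ' r‖ / η + 2 * ω * ‖ζ' r‖) ∂μ'
          = (∫ r in Set.Ioc a (p i), (‖z r‖ ^ 2 * ‖ζ' r‖ / η + 2 * ω * ‖ζ' r‖) ∂μ')
          + ∫ r in Set.Ioc (p i) (p (i+1)), (‖z r‖ ^ 2 * ‖ζ' r‖ / η + 2 * ω * ‖ζ' r‖) ∂μ' := by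
        rw [← hun]
        exact setIntegral_union (Set.Ioc_disjoint_Ioc_of_le le_rfl) measurableSet_Ioc
          (hGint μ' ζ' hζ' a (p i) ha hpiT) (hGint μ' ζ' hζ' (p i) (p (i+1)) (hp_nonneg i) hpi1T)
      rw [hs1, hs2]
      linarith
  have hfin := ind n le_rfl
  rw [hpn] at hfin
  -- split integrals
  have hsplit : ∀ (ν : Measure ℝ) (w : ℝ → EuclideanSpace ℝ (Fin d)), Integrable w ν →
      ∫ r in Set.Ioc a t, (‖z r‖ ^ 2 * ‖w r‖ / η + 2 * ω * ‖w r‖) ∂ν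
        ≤ (∫ r in Set.Ioc a t, ‖z r‖ ^ 2 * ‖w r‖ / η ∂ν) + 2 * ω * ∫ r, ‖w r‖ ∂ν := by
    intro ν w hw
    have h1 : ∫ r in Set.Ioc a t, (‖z r‖ ^ 2 * ‖w r‖ / η + 2 * ω * ‖w r‖) ∂ν
        = (∫ r in Set.Ioc a t, ‖z r‖ ^ 2 * ‖w r‖ / η ∂ν)
          + ∫ r in Set.Ioc a t, 2 * ω * ‖w r‖ ∂ν :=
      integral_add (part1_integrableOn hη hw hzc ha htT)
        ((hw.norm.const_mul (2 * ω)).restrict)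
    rw [h1]
    gcongr
    rw [MeasureTheory.integral_const_mul]
    have h2 : ∫ r in Set.Ioc a t, ‖w r‖ ∂ν ≤ ∫ r, ‖w r‖ ∂ν :=
      setIntegral_le_integral hw.norm (Filter.Eventually.of_forall fun r => norm_nonneg _)
    have hω0' : (0:ℝ) ≤ 2 * ω := by positivity
    exact mul_le_mul_of_nonneg_left h2 hω0'
  have hb1 := hsplit μ ζ hζ
  have hb2 := hsplit μ' ζ' hζ'
  have hLsum : 2 * ω * (∫ r, ‖ζ r‖ ∂μ) + 2 * ω * ∫ r, ‖ζ' r‖ ∂μ' ≤ ε := by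
    have he : ω * (2 * (L + 1)) = ε := by
      rw [hωdef]; field_simp
    have h3 : 2 * ω * (∫ r, ‖ζ r‖ ∂μ) + 2 * ω * ∫ r, ‖ζ' r‖ ∂μ' = 2 * ω * L := by
      rw [hLdef]; ring
    rw [h3]
    nlinarith [hω0.le, hL0]
  linarith


lemma tendsto_setIntegral_Ioc_shrink {g : ℝ → ℝ} {ν : Measure ℝ} (hg : Integrable g ν)
    (a : ℝ) {c : ℕ → ℝ} (hc : Filter.Tendsto c Filter.atTop (nhds 0)) :
    Filter.Tendsto (fun n => ∫ r in Set.Ioc a (a + c n), g r ∂ν) Filter.atTop (nhds 0) := by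
  have h0 : ∀ n : ℕ, ∫ r in Set.Ioc a (a + c n), g r ∂ν
      = ∫ r, (Set.Ioc a (a + c n)).indicator g r ∂ν := fun n =>
    (integral_indicator measurableSet_Ioc).symm
  simp only [h0]
  have hmain := tendsto_integral_of_dominated_convergence (μ := ν)
    (F := fun n r => (Set.Ioc a (a + c n)).indicator g r) (f := fun _ => (0:ℝ))
    (bound := fun r => ‖g r‖)
    (fun n => hg.aestronglyMeasurable.indicator measurableSet_Ioc)
    hg.norm
    (fun n => Filter.Eventually.of_forall fun r => norm_indicator_le_norm_self g r)
    ?_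
  · simpa using hmain
  · refine Filter.Eventually.of_forall fun r => ?_
    rcases le_or_gt r a with hra | hra
    · have : ∀ n : ℕ, (Set.Ioc a (a + c n)).indicator g r = 0 := fun n =>
        Set.indicator_of_notMem (fun hmem => absurd hmem.1 (not_lt.mpr hra)) g
      simp only [this]
      exact tendsto_const_nhds
    · have hev : ∀ᶠ n in Filter.atTop, c n < r - a := hc.eventually_lt_const (by linarith)
      refine Filter.Tendsto.congr' ?_ tendsto_const_nhds
      filter_upwards [hev] with n hn
      exact (Set.indicator_of_notMem (fun hmem => absurd hmem.2 (not_le.mpr (by linarith))) g).symm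

lemma gronwall_vanish {d : ℕ} {η T : ℝ} (hη : 0 < η) (hT : 0 ≤ T)
    {μ μ' : Measure ℝ}
    {ζ ζ' z : ℝ → EuclideanSpace ℝ (Fin d)}
    (hζ : Integrable ζ μ) (hζ' : Integrable ζ' μ')
    (hzc : ContinuousOn z (Set.Icc 0 T)) (hz0 : z 0 = 0)
    (hA : ∀ᵐ r ∂μ, r ∈ Set.Icc 0 T → 2 * ⟪z r, ζ r⟫ ≤ ‖z r‖ ^ 2 * ‖ζ r‖ / η)
    (hA' : ∀ᵐ r ∂μ', r ∈ Set.Icc 0 T → 2 * ⟪z r, ζ' r⟫ ≤ ‖z r‖ ^ 2 * ‖ζ' r‖ / η)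
    (hzdiff : ∀ s t : ℝ, 0 ≤ s → s ≤ t → t ≤ T →
      z t - z s = (∫ r in Set.Ioc s t, ζ r ∂μ) + ∫ r in Set.Ioc s t, ζ' r ∂μ') :
    ∀ t ∈ Set.Icc 0 T, z t = 0 := by
  set S := {u : ℝ | u ∈ Set.Icc 0 T ∧ ∀ s ∈ Set.Icc 0 u, z s = 0} with hSdef
  have h0S : 0 ∈ S := by
    refine ⟨⟨le_refl 0, hT⟩, fun s hs => ?_⟩
    have : s = 0 := le_antisymm hs.2 hs.1
    rw [this]; exact hz0
  have hne : S.Nonempty := ⟨0, h0S⟩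
  have hbdd : BddAbove S := ⟨T, fun u hu => hu.1.2⟩
  set a := sSup S with hadef
  have ha0 : 0 ≤ a := le_csSup hbdd h0S
  have haT : a ≤ T := csSup_le hne fun u hu => hu.1.2
  have hlt : ∀ s, 0 ≤ s → s < a → z s = 0 := by
    intro s hs0 hsa
    obtain ⟨u, huS, hsu⟩ := exists_lt_of_lt_csSup hne hsa
    exact huS.2 s ⟨hs0, hsu.le⟩
  have hza : z a = 0 := by
    rcases eq_or_lt_of_le ha0 with h0a | h0a
    · rw [← h0a]; exact hz0
    · set u : ℕ → ℝ := fun n => a - a / (n + 1) with hudef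
      have hu_lt : ∀ n : ℕ, u n < a := by
        intro n
        have : 0 < a / ((n:ℝ) + 1) := by positivity
        simp only [hudef]
        linarith
      have hu_ge : ∀ n : ℕ, 0 ≤ u n := by
        intro n
        have h1 : a / ((n:ℝ) + 1) ≤ a := div_le_self h0a.le (by
          have : (0:ℝ) ≤ (n:ℝ) := Nat.cast_nonneg n
          linarith)
        simp only [hudef]
        linarith
      have hu_mem : ∀ n : ℕ, u n ∈ Set.Icc 0 T := fun n =>
        ⟨hu_ge n, (hu_lt n).le.trans haT⟩
      have hdiv : Filter.Tendsto (fun n : ℕ => a / ((n:ℝ) + 1)) Filter.atTop (nhds 0) := by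
        have h := (tendsto_const_div_atTop_nhds_zero_nat a).comp (Filter.tendsto_add_atTop_nat 1)
        have heq : (fun n : ℕ => a / ((n:ℝ) + 1)) = (fun n : ℕ => a / (n:ℝ)) ∘ (fun n => n + 1) := by
          funext n
          simp [Function.comp]
        rw [heq]
        exact h
      have hconv : Filter.Tendsto u Filter.atTop (nhds a) := by
        have h12 := Filter.Tendsto.sub
          (tendsto_const_nhds : Filter.Tendsto (fun _ : ℕ => a) Filter.atTop (nhds a)) hdiv
        simpa using h12
      have hconv' : Filter.Tendsto u Filter.atTop (nhdsWithin a (Set.Icc 0 T)) :=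
        tendsto_nhdsWithin_of_tendsto_nhds_of_eventually_within _ hconv
          (Filter.Eventually.of_forall hu_mem)
      have h1 : Filter.Tendsto (fun n => z (u n)) Filter.atTop (nhds (z a)) :=
        ((hzc a ⟨ha0, haT⟩).tendsto).comp hconv'
      have h2 : (fun n => z (u n)) = fun _ => (0 : EuclideanSpace ℝ (Fin d)) :=
        funext fun n => hlt (u n) (hu_ge n) (hu_lt n)
      rw [h2] at h1
      exact tendsto_nhds_unique h1 tendsto_const_nhds
  have haS : ∀ s ∈ Set.Icc 0 a, z s = 0 := fun s hs =>
    hs.2.lt_or_eq.elim (fun h => hlt s hs.1 h) (fun h => h ▸ hza)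
  have haT' : a = T := by
    by_contra hne'
    have haltT : a < T := lt_of_le_of_ne haT hne'
    have hcseq : Filter.Tendsto (fun n : ℕ => (T - a) / ((n:ℝ) + 1)) Filter.atTop (nhds 0) := by
      have h := (tendsto_const_div_atTop_nhds_zero_nat (T - a)).comp (Filter.tendsto_add_atTop_nat 1)
      have heq : (fun n : ℕ => (T - a) / ((n:ℝ) + 1))
          = (fun n : ℕ => (T - a) / (n:ℝ)) ∘ (fun n => n + 1) := by
        funext n
        simp [Function.comp]
      rw [heq]
      exact h
    have h1 := tendsto_setIntegral_Ioc_shrink hζ.norm a hcseq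
    have h2 := tendsto_setIntegral_Ioc_shrink hζ'.norm a hcseq
    have h3 := (h1.add h2)
    rw [add_zero] at h3
    have h4 := h3.eventually_lt_const (by positivity : (0:ℝ) < η / 2)
    obtain ⟨n, hn⟩ := h4.exists
    set h : ℝ := (T - a) / ((n:ℝ) + 1) with hhdef
    have hh0 : 0 < h := by
      have : (0:ℝ) < T - a := by linarith
      positivity
    have hhT : a + h ≤ T := by
      have h5 : h ≤ T - a := div_le_self (by linarith) (by
        have : (0:ℝ) ≤ (n:ℝ) := Nat.cast_nonneg n
        linarith)
      linarith
    have hsub : Set.Icc a (a + h) ⊆ Set.Icc 0 T := fun r hr =>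
      ⟨ha0.trans hr.1, hr.2.trans hhT⟩
    have hcontK : ContinuousOn (fun r => ‖z r‖ ^ 2) (Set.Icc a (a + h)) :=
      (hzc.mono hsub).norm.pow 2
    obtain ⟨t₀, ht₀, hmax⟩ := isCompact_Icc.exists_isMaxOn
      ⟨a, Set.left_mem_Icc.mpr (by linarith)⟩ hcontK
    have hmax' : ∀ r ∈ Set.Icc a (a + h), ‖z r‖ ^ 2 ≤ ‖z t₀‖ ^ 2 :=
      fun r hr => hmax hr
    have hM0 : (0:ℝ) ≤ ‖z t₀‖ ^ 2 := by positivity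
    have ht₀T : t₀ ≤ T := ht₀.2.trans hhT
    have hkey := key_ineq hη hζ hζ' hzc hA hA' hzdiff ha0 ht₀.1 ht₀T
    rw [hza] at hkey
    simp only [norm_zero] at hkey
    have hb : ∀ (ν : Measure ℝ) (w : ℝ → EuclideanSpace ℝ (Fin d)), Integrable w ν →
        ∫ r in Set.Ioc a t₀, ‖z r‖ ^ 2 * ‖w r‖ / η ∂ν
          ≤ ‖z t₀‖ ^ 2 / η * ∫ r in Set.Ioc a (a + h), ‖w r‖ ∂ν := by
      intro ν w hw
      have hstep1 : ∫ r in Set.Ioc a t₀, ‖z r‖ ^ 2 * ‖w r‖ / η ∂ν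
          ≤ ∫ r in Set.Ioc a t₀, ‖z t₀‖ ^ 2 / η * ‖w r‖ ∂ν := by
        refine setIntegral_mono_on (part1_integrableOn hη hw hzc ha0 ht₀T)
          ((hw.norm.const_mul (‖z t₀‖ ^ 2 / η)).restrict) measurableSet_Ioc ?_
        intro r hr
        have hrK : r ∈ Set.Icc a (a + h) := ⟨hr.1.le, hr.2.trans ht₀.2⟩
        have h6 := hmax' r hrK
        have h7 : ‖z r‖ ^ 2 * ‖w r‖ / η = ‖z r‖ ^ 2 / η * ‖w r‖ := by ring
        rw [h7]
        gcongr
      have hstep2 : ∫ r in Set.Ioc a t₀, ‖z t₀‖ ^ 2 / η * ‖w r‖ ∂ν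
          = ‖z t₀‖ ^ 2 / η * ∫ r in Set.Ioc a t₀, ‖w r‖ ∂ν :=
        MeasureTheory.integral_const_mul _ _
      have hstep3 : ∫ r in Set.Ioc a t₀, ‖w r‖ ∂ν ≤ ∫ r in Set.Ioc a (a + h), ‖w r‖ ∂ν :=
        setIntegral_mono_set hw.norm.integrableOn
          (Filter.Eventually.of_forall fun r => norm_nonneg _)
          (HasSubset.Subset.eventuallyLE (Set.Ioc_subset_Ioc_right ht₀.2))
      calc ∫ r in Set.Ioc a t₀, ‖z r‖ ^ 2 * ‖w r‖ / η ∂ν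
          ≤ ∫ r in Set.Ioc a t₀, ‖z t₀‖ ^ 2 / η * ‖w r‖ ∂ν := hstep1
        _ = ‖z t₀‖ ^ 2 / η * ∫ r in Set.Ioc a t₀, ‖w r‖ ∂ν := hstep2
        _ ≤ ‖z t₀‖ ^ 2 / η * ∫ r in Set.Ioc a (a + h), ‖w r‖ ∂ν := by
            exact mul_le_mul_of_nonneg_left hstep3 (by positivity)
    have hb1 := hb μ ζ hζ
    have hb2 := hb μ' ζ' hζ'
    have hsum : ‖z t₀‖ ^ 2 / η * (∫ r in Set.Ioc a (a + h), ‖ζ r‖ ∂μ)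
        + ‖z t₀‖ ^ 2 / η * (∫ r in Set.Ioc a (a + h), ‖ζ' r‖ ∂μ')
        ≤ ‖z t₀‖ ^ 2 / η * (η / 2) := by
      have h8 : ‖z t₀‖ ^ 2 / η * (∫ r in Set.Ioc a (a + h), ‖ζ r‖ ∂μ)
          + ‖z t₀‖ ^ 2 / η * (∫ r in Set.Ioc a (a + h), ‖ζ' r‖ ∂μ')
          = ‖z t₀‖ ^ 2 / η * ((∫ r in Set.Ioc a (a + h), ‖ζ r‖ ∂μ)
            + ∫ r in Set.Ioc a (a + h), ‖ζ' r‖ ∂μ') := by ring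
      rw [h8]
      exact mul_le_mul_of_nonneg_left hn.le (by positivity)
    have hhalf : ‖z t₀‖ ^ 2 / η * (η / 2) = ‖z t₀‖ ^ 2 / 2 := by
      field_simp
    have hMle : ‖z t₀‖ ^ 2 ≤ ‖z t₀‖ ^ 2 / 2 := by
      rw [← hhalf]
      linarith
    have hMeq : ‖z t₀‖ ^ 2 = 0 := by linarith
    have hzero : ∀ s ∈ Set.Icc a (a + h), z s = 0 := by
      intro s hs
      have h9 := hmax' s hs
      have h10 : ‖z s‖ = 0 := by nlinarith [norm_nonneg (z s)]
      exact norm_eq_zero.mp h10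
    have hahS : a + h ∈ S := by
      refine ⟨⟨by linarith, hhT⟩, fun s hs => ?_⟩
      rcases le_or_gt s a with h11 | h11
      · exact haS s ⟨hs.1, h11⟩
      · exact hzero s ⟨h11.le, hs.2⟩
    have := le_csSup hbdd hahS
    linarith
  intro t ht
  exact haS t ⟨ht.1, ht.2.trans_eq haT'.symm⟩

end Aux


/-- Energy inequality and vanishing for the difference of two reflected trajectories:
if dz = -dk + dk̃ with dk(t) ∈ N(C(t),x(t)), dk̃(t) ∈ N(C(t),x̃(t)), z = x - x̃, z(0) = 0,
and each C(t) is η-prox-regular, then e = |z|² satisfies the integrated Gronwall inequality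
e(t) ≤ ∫_{[0,t]} e/(2η) d(|k|+|k̃|) and hence e ≡ 0. -/
theorem difference_of_reflected_vanishes {d : ℕ} (η T : ℝ) (hη : 0 < η) (hT : 0 ≤ T)
    (C : ℝ → Set (EuclideanSpace ℝ (Fin d)))
    (hreg : ∀ t ∈ Set.Icc 0 T, IsClosed (C t) ∧ IsProxRegular η (C t))
    (μ μ' : Measure ℝ) [IsFiniteMeasure μ] [IsFiniteMeasure μ']
    (hsupp : μ (Set.Icc 0 T)ᶜ = 0) (hsupp' : μ' (Set.Icc 0 T)ᶜ = 0)
    (ξ ξ' : ℝ → EuclideanSpace ℝ (Fin d))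
    (hξ : Integrable ξ μ) (hξ' : Integrable ξ' μ')
    (x x' : ℝ → EuclideanSpace ℝ (Fin d))
    (hx : ∀ t ∈ Set.Icc 0 T, x t ∈ C t) (hx' : ∀ t ∈ Set.Icc 0 T, x' t ∈ C t)
    (hxc : ContinuousOn x (Set.Icc 0 T)) (hx'c : ContinuousOn x' (Set.Icc 0 T))
    (hcone : ∀ᵐ s ∂μ, ξ s ∈ proxNormalCone (C s) (x s))
    (hcone' : ∀ᵐ s ∂μ', ξ' s ∈ proxNormalCone (C s) (x' s))
    (hcont : ContinuousOn
      (fun t => (μ (Set.Icc 0 t)).toReal + (μ' (Set.Icc 0 t)).toReal) (Set.Icc 0 T))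
    (z : ℝ → EuclideanSpace ℝ (Fin d)) (hzdef : ∀ t, z t = x t - x' t)
    (hz0 : z 0 = 0)
    (hz : ∀ t ∈ Set.Icc 0 T,
      z t = -(∫ s in Set.Icc 0 t, ξ s ∂μ) + ∫ s in Set.Icc 0 t, ξ' s ∂μ') :
    (∀ t ∈ Set.Icc 0 T,
      ‖z t‖ ^ 2 ≤ ∫ s in Set.Icc 0 t, ‖z s‖ ^ 2 / (2 * η) ∂(μ + μ')) ∧
    ∀ t ∈ Set.Icc 0 T, z t = 0 := by
  have hzc : ContinuousOn z (Set.Icc 0 T) := by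
    have h := hxc.sub hx'c
    have hfe : z = fun t => x t - x' t := funext hzdef
    rw [hfe]; exact h
  have hA : ∀ᵐ r ∂μ, r ∈ Set.Icc 0 T →
      2 * ⟪z r, -(ξ r)⟫ ≤ ‖z r‖ ^ 2 * ‖-(ξ r)‖ / η := by
    filter_upwards [hcone] with r hc hr
    have hprox := prox_ineq hη (hreg r hr).2 (hx r hr) (hx' r hr) hc
    have hxx : x' r - x r = -(z r) := by rw [hzdef r]; abel
    rw [hxx, norm_neg] at hprox
    have hip : ⟪ξ r, -(z r)⟫ = ⟪z r, -(ξ r)⟫ := by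
      rw [inner_neg_right, inner_neg_right, real_inner_comm]
    rw [hip] at hprox
    rw [norm_neg]
    have heq : ‖ξ r‖ * ‖z r‖ ^ 2 / (2 * η) * 2 = ‖z r‖ ^ 2 * ‖ξ r‖ / η := by
      field_simp
    linarith
  have hA' : ∀ᵐ r ∂μ', r ∈ Set.Icc 0 T →
      2 * ⟪z r, ξ' r⟫ ≤ ‖z r‖ ^ 2 * ‖ξ' r‖ / η := by
    filter_upwards [hcone'] with r hc hr
    have hprox := prox_ineq hη (hreg r hr).2 (hx' r hr) (hx r hr) hc
    have hxx : x r - x' r = z r := (hzdef r).symm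
    rw [hxx] at hprox
    have hip : ⟪ξ' r, z r⟫ = ⟪z r, ξ' r⟫ := real_inner_comm _ _
    rw [hip] at hprox
    have heq : ‖ξ' r‖ * ‖z r‖ ^ 2 / (2 * η) * 2 = ‖z r‖ ^ 2 * ‖ξ' r‖ / η := by
      field_simp
    linarith
  have hzdiff : ∀ s t : ℝ, 0 ≤ s → s ≤ t → t ≤ T →
      z t - z s = (∫ r in Set.Ioc s t, -(ξ r) ∂μ) + ∫ r in Set.Ioc s t, ξ' r ∂μ' := by
    intro s t hs hst htT
    have hsI : s ∈ Set.Icc 0 T := ⟨hs, hst.trans htT⟩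
    have htI : t ∈ Set.Icc 0 T := ⟨hs.trans hst, htT⟩
    have hdisj : Disjoint (Set.Icc (0:ℝ) s) (Set.Ioc s t) :=
      Set.disjoint_left.mpr fun r h1 h2 => absurd h1.2 (not_le.mpr h2.1)
    have hsplitμ : ∫ r in Set.Icc 0 t, ξ r ∂μ
        = (∫ r in Set.Icc 0 s, ξ r ∂μ) + ∫ r in Set.Ioc s t, ξ r ∂μ := by
      rw [← Set.Icc_union_Ioc_eq_Icc hs hst]
      exact setIntegral_union hdisj measurableSet_Ioc hξ.integrableOn hξ.integrableOn
    have hsplitμ' : ∫ r in Set.Icc 0 t, ξ' r ∂μ'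
        = (∫ r in Set.Icc 0 s, ξ' r ∂μ') + ∫ r in Set.Ioc s t, ξ' r ∂μ' := by
      rw [← Set.Icc_union_Ioc_eq_Icc hs hst]
      exact setIntegral_union hdisj measurableSet_Ioc hξ'.integrableOn hξ'.integrableOn
    have hneg : ∫ r in Set.Ioc s t, -(ξ r) ∂μ = -∫ r in Set.Ioc s t, ξ r ∂μ :=
      integral_neg _
    rw [hz t htI, hz s hsI, hsplitμ, hsplitμ', hneg]
    abel
  have hvanish := gronwall_vanish hη hT hξ.neg hξ' hzc hz0 hA hA' hzdiff
  refine ⟨?_, hvanish⟩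
  intro t ht
  rw [hvanish t ht, norm_zero]
  have h2 : Set.EqOn (fun s => ‖z s‖ ^ 2 / (2 * η)) (fun _ => (0:ℝ)) (Set.Icc 0 t) := by
    intro s hs
    simp only
    rw [hvanish s ⟨hs.1, hs.2.trans ht.2⟩, norm_zero]
    simp
  rw [setIntegral_congr_fun measurableSet_Icc h2]
  simp
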